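/- Let C be a linear [n,k] code over F_q with weight distribution (A_0,...,A_n) and let d⊥ be the minimum distance of the dual code. For every integer ν with n - d⊥ < ν ≤ n, the sum over s from 0 to ν of binom(n-s, ν-s)·A_s equals binom(n,ν)·q^(ν+k-n). -/

import Mathlib

open Finset Matrix

set_option linter.unnecessarySeqFocus false

lemma aux_count_supersets {α : Type*} [Fintype α] [DecidableEq α]
    {ν : ℕ} (D : Finset α) (h : D.card ≤ ν) :
    #((univ.powersetCard ν).filter (fun T => D ⊆ T))
      = (Fintype.card α - D.card).choose (ν - D.card) := by
  rw [← Finset.card_compl D, ← Finset.card_powersetCard]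
  apply Finset.card_bij' (fun T _ => T \ D) (fun U _ => U ∪ D)
  · intro T hT
    simp only [mem_filter, mem_powersetCard] at hT
    rw [mem_powersetCard]
    constructor
    · intro i hi
      simp only [mem_sdiff] at hi
      simp [hi.2]
    · rw [Finset.card_sdiff_of_subset hT.2, hT.1.2]
  · intro U hU
    rw [mem_powersetCard] at hU
    have hdisj : Disjoint U D := by
      rw [Finset.disjoint_left]
      intro a ha
      have := hU.1 ha
      simpa using this
    simp only [mem_filter, mem_powersetCard]
    refine ⟨⟨subset_univ _, ?_⟩, subset_union_right⟩
    rw [Finset.card_union_of_disjoint hdisj, hU.2]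
    omega
  · intro T hT
    simp only [mem_filter, mem_powersetCard] at hT
    exact Finset.sdiff_union_of_subset hT.2
  · intro U hU
    rw [mem_powersetCard] at hU
    have hdisj : Disjoint U D := by
      rw [Finset.disjoint_left]
      intro a ha
      have := hU.1 ha
      simpa using this
    rw [Finset.union_sdiff_cancel_right] <;> simp [hdisj]

lemma aux_card_ker {q n k : ℕ} {F : Type*} [Field F] [Fintype F] [DecidableEq F]
    (hq : Fintype.card F = q)
    (C : Submodule F (Fin n → F)) (hk : Module.finrank F C = k)
    {dperp : ℕ}
    (hlb : ∀ y : Fin n → F, (∀ x ∈ C, ∑ i, x i * y i = 0) → y ≠ 0 →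
      dperp ≤ hammingNorm y)
    (T : Finset (Fin n)) (hTc : #Tᶜ < dperp) :
    #Tᶜ ≤ k ∧
      Nat.card {x : Fin n → F // x ∈ C ∧ ∀ i ∉ T, x i = 0} * q ^ (#Tᶜ) = q ^ k := by
  classical
  set S : Finset (Fin n) := Tᶜ with hS
  let φ : C →ₗ[F] ({i // i ∈ S} → F) :=
    (LinearMap.funLeft F F (fun i : {i // i ∈ S} => (i : Fin n))).comp C.subtype
  have hφ : ∀ (x : C) (i : {i // i ∈ S}), φ x i = (x : Fin n → F) i := fun x i => rfl
  -- surjectivity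
  have hsurj : Function.Surjective φ := by
    rw [← LinearMap.range_eq_top]
    by_contra h
    obtain ⟨f, hf0, hfbot⟩ := Submodule.exists_dual_map_eq_bot_of_lt_top
      (lt_top_iff_ne_top.mpr h) inferInstance
    have hker : ∀ v ∈ LinearMap.range φ, f v = 0 := by
      intro v hv
      have : f v ∈ (LinearMap.range φ).map f := Submodule.mem_map_of_mem hv
      rwa [hfbot, Submodule.mem_bot] at this
    set y : Fin n → F := fun i =>
      if h : i ∈ S then f (fun j => if (⟨i, h⟩ : {i // i ∈ S}) = j then 1 else 0) else 0 with hy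
    have hy_apply : ∀ (i : {i // i ∈ S}),
        y i = f (fun j => if i = j then 1 else 0) := by
      intro i
      simp only [hy, dif_pos i.2]
    have hortho : ∀ x ∈ C, ∑ i, x i * y i = 0 := by
      intro x hx
      have h1 : ∑ i, x i * y i = ∑ i ∈ S, x i * y i := by
        rw [Finset.sum_subset (Finset.subset_univ S)]
        intro i _ hi
        simp [hy, dif_neg hi]
      rw [h1, ← Finset.sum_attach S (fun i => x i * y i)]
      have h2 : ∑ i ∈ S.attach, x i * y i
          = ∑ i : {i // i ∈ S}, (φ ⟨x, hx⟩) i • f (fun j => if i = j then 1 else 0) := by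
        rw [← Finset.univ_eq_attach]
        refine Finset.sum_congr rfl (fun i _ => ?_)
        rw [hy_apply i, hφ, smul_eq_mul]
      rw [h2, ← LinearMap.pi_apply_eq_sum_univ f]
      exact hker _ (LinearMap.mem_range_self φ _)
    have hyne : y ≠ 0 := by
      intro hy0
      apply hf0
      refine LinearMap.ext fun v => ?_
      rw [LinearMap.pi_apply_eq_sum_univ f v, LinearMap.zero_apply]
      apply Finset.sum_eq_zero
      intro i _
      rw [← hy_apply i, hy0]
      simp
    have hwt : hammingNorm y ≤ #S := by
      unfold hammingNorm
      apply Finset.card_le_card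
      intro i hi
      simp only [Finset.mem_filter] at hi
      by_contra hiS
      exact hi.2 (by simp [hy, dif_neg hiS])
    exact absurd (hlb y hortho hyne) (by omega)
  -- finrank bound
  have hfr : Module.finrank F ({i // i ∈ S} → F) = #S := by
    rw [Module.finrank_pi, Fintype.card_coe]
  have hle : #S ≤ k := by
    have h1 := LinearMap.finrank_range_le φ
    rw [LinearMap.range_eq_top.mpr hsurj, finrank_top, hfr, hk] at h1
    exact h1
  refine ⟨hle, ?_⟩
  -- cardinalities
  have hC : Nat.card C = q ^ k := by
    have : Fintype C := Fintype.ofFinite _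
    rw [Nat.card_eq_fintype_card, Module.card_eq_pow_finrank (K := F), hq, hk]
  have hquot : Nat.card (C ⧸ LinearMap.ker φ) = q ^ (#S) := by
    have e1 : (C ⧸ LinearMap.ker φ) ≃ ({i // i ∈ S} → F) :=
      (φ.quotKerEquivRange.trans
        (LinearEquiv.ofTop _ (LinearMap.range_eq_top.mpr hsurj))).toEquiv
    rw [Nat.card_congr e1, Nat.card_eq_fintype_card, Fintype.card_fun, hq, Fintype.card_coe]
  have hker_card : Nat.card {x : Fin n → F // x ∈ C ∧ ∀ i ∉ T, x i = 0}
      = Nat.card (LinearMap.ker φ) := by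
    refine Nat.card_congr ⟨
      fun w => ⟨⟨w.1, w.2.1⟩, ?_⟩,
      fun z => ⟨z.1.1, z.1.2, fun i hi => ?_⟩,
      fun w => rfl, fun z => rfl⟩
    · rw [LinearMap.mem_ker]
      funext j
      exact w.2.2 j.1 (Finset.mem_compl.mp j.2)
    · have hz := z.2
      rw [LinearMap.mem_ker] at hz
      have h3 : φ z.1 ⟨i, Finset.mem_compl.mpr hi⟩ = 0 := by rw [hz]; rfl
      rwa [hφ] at h3
  rw [hker_card, ← hquot, ← hC]
  exact (Submodule.card_eq_card_quotient_mul_card (LinearMap.ker φ)).symm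

lemma aux_percw {n ν : ℕ} {F : Type*} [Field F] [Fintype F] [DecidableEq F] (x : Fin n → F) :
    #((Finset.powersetCard ν (univ : Finset (Fin n))).filter fun T => ∀ i ∉ T, x i = 0)
    = if hammingNorm x ≤ ν then (n - hammingNorm x).choose (ν - hammingNorm x) else 0 := by
  set D : Finset (Fin n) := univ.filter (fun i => x i ≠ 0) with hDdef
  have hD : hammingNorm x = #D := rfl
  have hiff : ∀ T ∈ Finset.powersetCard ν (univ : Finset (Fin n)),
      (∀ i ∉ T, x i = 0) ↔ D ⊆ T := by
    intro T _
    constructor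
    · intro h i hiD
      by_contra hiT
      exact (Finset.mem_filter.mp hiD).2 (h i hiT)
    · intro h i hiT
      by_contra hxi
      exact hiT (h (Finset.mem_filter.mpr ⟨Finset.mem_univ _, hxi⟩))
  rw [Finset.filter_congr hiff]
  by_cases hle : hammingNorm x ≤ ν
  · rw [if_pos hle, aux_count_supersets D (by rw [← hD]; exact hle), Fintype.card_fin, hD]
  · rw [if_neg hle, Finset.card_eq_zero, Finset.filter_eq_empty_iff]
    intro T hT
    rw [Finset.mem_powersetCard] at hT
    intro hsub
    have := Finset.card_le_card hsub
    rw [hT.2, ← hD] at this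
    omega

/-- **Proposition (the linear system).** For a linear `[n,k]` code `C` over `F_q` with
dual distance `d⊥`, for every `n - d⊥ < ν ≤ n`:
`∑_{s=0}^{ν} C(n-s, ν-s) A_s = C(n,ν) q^{ν+k-n}`. -/
theorem weight_distribution_linear_system
    (q n k : ℕ) (F : Type*) [Field F] [Fintype F] [DecidableEq F]
    (hq : Fintype.card F = q)
    (C : Submodule F (Fin n → F)) (hk : Module.finrank F C = k)
    (A : ℕ → ℕ)
    (hA : ∀ s, A s = Nat.card {x : Fin n → F // x ∈ C ∧ hammingNorm x = s})
    (dperp : ℕ)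
    (hdperp : IsLeast {w : ℕ | ∃ y : Fin n → F,
      (∀ x ∈ C, ∑ i, x i * y i = 0) ∧ y ≠ 0 ∧ hammingNorm y = w} dperp)
    (ν : ℕ) (hν1 : n - dperp < ν) (hν2 : ν ≤ n) :
    ∑ s ∈ range (ν + 1), ((n - s).choose (ν - s) : ℚ) * A s
      = (n.choose ν : ℚ) * (q : ℚ) ^ ((ν : ℤ) + k - n) := by
  classical
  obtain ⟨y0, hy0o, hy0ne, hy0w⟩ := hdperp.1
  have hd0 : 0 < dperp := by
    rw [← hy0w]
    exact hammingNorm_pos_iff.mpr hy0ne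
  have hlb : ∀ y : Fin n → F, (∀ x ∈ C, ∑ i, x i * y i = 0) → y ≠ 0 →
      dperp ≤ hammingNorm y := fun y h1 h2 => hdperp.2 ⟨y, h1, h2, rfl⟩
  have hq0 : 0 < q := hq ▸ Fintype.card_pos
  -- key: each ν-set supports exactly q^(k+ν-n) codewords
  have key : ∀ T : Finset (Fin n), #T = ν →
      #(univ.filter fun x : Fin n → F => x ∈ C ∧ ∀ i ∉ T, x i = 0) = q ^ (k + ν - n)
      ∧ n - ν ≤ k := by
    intro T hT
    have hTc : #Tᶜ = n - ν := by rw [Finset.card_compl, hT, Fintype.card_fin]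
    have hTc' : #Tᶜ < dperp := by omega
    obtain ⟨hle, hcard⟩ := aux_card_ker hq C hk hlb T hTc'
    rw [hTc] at hle hcard
    have hfc : Nat.card {x : Fin n → F // x ∈ C ∧ ∀ i ∉ T, x i = 0}
        = #(univ.filter fun x : Fin n → F => x ∈ C ∧ ∀ i ∉ T, x i = 0) := by
      rw [Nat.card_eq_fintype_card, Fintype.card_subtype]
    refine ⟨?_, hle⟩
    rw [← hfc]
    have hsplit : q ^ k = q ^ (k + ν - n) * q ^ (n - ν) := by
      clear hfc hcard
      rw [← pow_add]
      congr 1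
      omega
    rw [hsplit] at hcard
    exact Nat.eq_of_mul_eq_mul_right (pow_pos hq0 _) hcard
  have hkn : n - ν ≤ k := by
    obtain ⟨T, _, hT⟩ := Finset.exists_subset_card_eq (s := (univ : Finset (Fin n))) (n := ν)
      (by rw [Finset.card_univ, Fintype.card_fin]; exact hν2)
    exact (key T hT).2
  -- double counting, all in ℕ
  set Cf : Finset (Fin n → F) := univ.filter (· ∈ C) with hCf
  have count : ∑ T ∈ Finset.powersetCard ν (univ : Finset (Fin n)),
      #(univ.filter fun x : Fin n → F => x ∈ C ∧ ∀ i ∉ T, x i = 0)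
      = n.choose ν * q ^ (k + ν - n) := by
    rw [Finset.sum_congr rfl (fun T hT => (key T (Finset.mem_powersetCard.mp hT).2).1),
      Finset.sum_const, Finset.card_powersetCard, Finset.card_univ, Fintype.card_fin,
      smul_eq_mul]
  have swap : ∑ T ∈ Finset.powersetCard ν (univ : Finset (Fin n)),
      #(univ.filter fun x : Fin n → F => x ∈ C ∧ ∀ i ∉ T, x i = 0)
      = ∑ x ∈ Cf, #((Finset.powersetCard ν (univ : Finset (Fin n))).filter
          fun T => ∀ i ∉ T, x i = 0) := by
    simp only [Finset.card_filter]
    rw [Finset.sum_comm, Finset.sum_filter]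
    refine Finset.sum_congr rfl fun x _ => ?_
    by_cases hx : x ∈ C
    · simp [hx]
    · simp [hx]
  have percw : ∑ x ∈ Cf, #((Finset.powersetCard ν (univ : Finset (Fin n))).filter
          fun T => ∀ i ∉ T, x i = 0)
      = ∑ x ∈ Cf, (if hammingNorm x ≤ ν then
          (n - hammingNorm x).choose (ν - hammingNorm x) else 0) :=
    Finset.sum_congr rfl fun x _ => aux_percw x
  -- group by weight
  have hAs : ∀ s, A s = #(Cf.filter fun x => hammingNorm x = s) := by
    intro s
    rw [hA s, Nat.card_eq_fintype_card, Fintype.card_subtype, hCf, Finset.filter_filter]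
  have fib : ∑ x ∈ Cf, (if hammingNorm x ≤ ν then
          (n - hammingNorm x).choose (ν - hammingNorm x) else 0)
      = ∑ s ∈ range (n + 1), A s * (if s ≤ ν then (n - s).choose (ν - s) else 0) := by
    rw [← Finset.sum_fiberwise_of_maps_to (g := hammingNorm) (t := range (n + 1))
      (fun x _ => Finset.mem_range.mpr (by
        have h9 := hammingNorm_le_card_fintype (x := x)
        rw [Fintype.card_fin] at h9
        exact Nat.lt_succ_of_le h9))]
    refine Finset.sum_congr rfl fun s _ => ?_
    rw [Finset.sum_congr rfl (fun x hx => by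
      rw [(Finset.mem_filter.mp hx).2]), Finset.sum_const, smul_eq_mul, ← hAs s]
  have trunc : ∑ s ∈ range (n + 1), A s * (if s ≤ ν then (n - s).choose (ν - s) else 0)
      = ∑ s ∈ range (ν + 1), A s * (n - s).choose (ν - s) := by
    rw [← Finset.sum_subset (Finset.range_subset_range.mpr (Nat.succ_le_succ hν2))
      (fun s _ hs => by
        have h1 : ¬ s < ν + 1 := fun h => hs (Finset.mem_range.mpr h)
        rw [if_neg (fun h => h1 (Nat.lt_succ_of_le h)), mul_zero])]
    refine Finset.sum_congr rfl fun s hs => ?_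
    rw [if_pos (Nat.lt_succ_iff.mp (Finset.mem_range.mp hs))]
  have natId : ∑ s ∈ range (ν + 1), A s * (n - s).choose (ν - s)
      = n.choose ν * q ^ (k + ν - n) := by
    rw [← trunc, ← fib, ← percw, ← swap, count]
  -- cast to ℚ
  have hcast : ((ν : ℤ) + k - n) = ((k + ν - n : ℕ) : ℤ) := by
    clear natId trunc fib percw swap count
    push_cast
    omega
  rw [hcast, zpow_natCast]
  have hL : (∑ s ∈ range (ν + 1), ((n - s).choose (ν - s) : ℚ) * A s)
      = ((∑ s ∈ range (ν + 1), A s * (n - s).choose (ν - s) : ℕ) : ℚ) := by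
    push_cast
    exact Finset.sum_congr rfl fun s _ => mul_comm _ _
  rw [hL, natId]
  push_cast
  ring
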